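/- For all positive integers h, m, n, the word α^h β^m α^h β^n is regular if and only if m < n. -/

import Mathlib

/-- The two-letter alphabet `{α, β}`. -/
inductive HWLetter : Type
  | α : HWLetter
  | β : HWLetter
  deriving DecidableEq

/-- The order on letters: `α > β`, i.e. `β < α`. -/
def HWLetter.lt : HWLetter → HWLetter → Prop :=
  fun x y => x = HWLetter.β ∧ y = HWLetter.α

/-- `n`-fold concatenation of a word with itself. -/
def wordPow (X : List HWLetter) (n : ℕ) : List HWLetter :=
  (List.replicate n X).flatten

/-- `V > W` iff the concatenation `V ++ W` is strictly greater than `W ++ V`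
in the lexicographic order induced by `α > β`; i.e. `W ++ V <lex V ++ W`. -/
def wordGT (V W : List HWLetter) : Prop :=
  List.Lex HWLetter.lt (W ++ V) (V ++ W)

/-- A word is regular (Lyndon–Shirshov) if it is nonempty and for every factorization
`W = L ++ R` into nonempty words, `L > R`. -/
def IsRegularWord (W : List HWLetter) : Prop :=
  W ≠ [] ∧ ∀ L R : List HWLetter, L ≠ [] → R ≠ [] → W = L ++ R → wordGT L R

namespace HWProof

open HWLetter List

instance : IsIrrefl HWLetter HWLetter.lt :=
  ⟨by rintro x ⟨rfl, h⟩; exact HWLetter.noConfusion h⟩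

lemma wordPow_single (x : HWLetter) (k : ℕ) : wordPow [x] k = List.replicate k x := by
  induction k with
  | zero => rfl
  | succ k ih =>
      rw [wordPow, List.replicate_succ, List.flatten_cons, List.replicate_succ,
        ← ih, wordPow]
      rfl

lemma lex_ba (u v : List HWLetter) :
    List.Lex HWLetter.lt (HWLetter.β :: u) (HWLetter.α :: v) :=
  List.Lex.rel ⟨rfl, rfl⟩

lemma lex_rb_ra {p q : ℕ} (hp : 1 ≤ p) (hq : 1 ≤ q) (u v : List HWLetter) :
    List.Lex HWLetter.lt (List.replicate p HWLetter.β ++ u)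
      (List.replicate q HWLetter.α ++ v) := by
  obtain ⟨p, rfl⟩ := Nat.exists_eq_add_of_le hp
  obtain ⟨q, rfl⟩ := Nat.exists_eq_add_of_le hq
  simp only [Nat.add_comm 1, List.replicate_succ, List.cons_append]
  exact lex_ba _ _

lemma lex_append_iff (x : List HWLetter) {a b : List HWLetter} :
    List.Lex HWLetter.lt (x ++ a) (x ++ b) ↔ List.Lex HWLetter.lt a b := by
  induction x with
  | nil => rfl
  | cons c x ih => simpa [List.cons_lex_cons_iff, irrefl_of HWLetter.lt c] using ih

/-- left side starts with fewer `α`'s, then a `β`. -/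
lemma lex_alpha {k1 k2 p : ℕ} (hk : k1 < k2) (hp : 1 ≤ p) (u v : List HWLetter) :
    List.Lex HWLetter.lt
      (List.replicate k1 HWLetter.α ++ (List.replicate p HWLetter.β ++ u))
      (List.replicate k2 HWLetter.α ++ v) := by
  rw [show k2 = k1 + (k2 - k1) from by omega, List.replicate_add, List.append_assoc,
    lex_append_iff]
  exact lex_rb_ra hp (by omega) _ _

lemma not_lex_ab (u v : List HWLetter) :
    ¬ List.Lex HWLetter.lt (HWLetter.α :: u) (HWLetter.β :: v) := by
  intro hle
  cases hle with
  | rel h => exact HWLetter.noConfusion h.1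

lemma not_lex_ra_rb {p q : ℕ} (hp : 1 ≤ p) (hq : 1 ≤ q) (u v : List HWLetter) :
    ¬ List.Lex HWLetter.lt (List.replicate p HWLetter.α ++ u)
      (List.replicate q HWLetter.β ++ v) := by
  obtain ⟨p, rfl⟩ := Nat.exists_eq_add_of_le hp
  obtain ⟨q, rfl⟩ := Nat.exists_eq_add_of_le hq
  simp only [Nat.add_comm 1, List.replicate_succ, List.cons_append]
  exact not_lex_ab _ _

lemma not_lex_self (l : List HWLetter) : ¬ List.Lex HWLetter.lt l l := by
  induction l with
  | nil => intro h; cases h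
  | cons a l ih =>
      intro h
      cases h with
      | cons h => exact ih h
      | rel h => obtain ⟨h1, h2⟩ := h; subst h1; exact HWLetter.noConfusion h2

lemma split_rep {x : HWLetter} {k : ℕ} {L R T : List HWLetter}
    (hE : L ++ R = List.replicate k x ++ T) :
    (∃ i, i ≤ k ∧ L = List.replicate i x ∧ R = List.replicate (k - i) x ++ T) ∨
    (∃ L', L = List.replicate k x ++ L' ∧ L' ++ R = T) := by
  rcases List.append_eq_append_iff.mp hE with ⟨a', h1, h2⟩ | ⟨c, h1, h2⟩
  · left
    have hlen := congrArg List.length h1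
    simp only [List.length_replicate, List.length_append] at hlen
    have hLlen : L.length ≤ k := by omega
    have hLmem : ∀ b ∈ L, b = x := fun b hb =>
      List.eq_of_mem_replicate (h1 ▸ List.mem_append_left a' hb)
    have ha'mem : ∀ b ∈ a', b = x := fun b hb =>
      List.eq_of_mem_replicate (h1 ▸ List.mem_append_right L hb)
    refine ⟨L.length, hLlen, List.eq_replicate_length.mpr hLmem, ?_⟩
    rw [h2, show k - L.length = a'.length from by omega,
      ← List.eq_replicate_length.mpr ha'mem]
  · exact Or.inr ⟨c, h1, h2.symm⟩

lemma key {h m n : ℕ} (hh : 1 ≤ h) (hmn : m < n) :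
    List.Lex HWLetter.lt
      (List.replicate h HWLetter.α ++ (List.replicate n HWLetter.β ++
        (List.replicate h HWLetter.α ++ List.replicate m HWLetter.β)))
      (List.replicate h HWLetter.α ++ (List.replicate m HWLetter.β ++
        (List.replicate h HWLetter.α ++ List.replicate n HWLetter.β))) := by
  rw [lex_append_iff, show n = m + (n - m) from by omega, List.replicate_add,
    List.append_assoc, lex_append_iff]
  exact lex_rb_ra (by omega) hh _ _

theorem main (h m n : ℕ) (hh : 1 ≤ h) (hm : 1 ≤ m) (hn : 1 ≤ n) :
    IsRegularWord (wordPow [HWLetter.α] h ++ wordPow [HWLetter.β] m ++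
      wordPow [HWLetter.α] h ++ wordPow [HWLetter.β] n) ↔ m < n := by
  simp only [wordPow_single]
  constructor
  · -- regular → m < n
    rintro ⟨-, hreg⟩
    by_contra hle
    push_neg at hle  -- n ≤ m
    have hGT := hreg (List.replicate h HWLetter.α ++ List.replicate m HWLetter.β)
      (List.replicate h HWLetter.α ++ List.replicate n HWLetter.β)
      (by intro hc; have := congrArg List.length hc; simp at this; omega)
      (by intro hc; have := congrArg List.length hc; simp at this; omega)
      (by simp [List.append_assoc])
    unfold wordGT at hGT
    simp only [List.append_assoc] at hGT
    rw [lex_append_iff, show m = n + (m - n) from by omega, List.replicate_add,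
      List.append_assoc, lex_append_iff] at hGT
    rcases Nat.eq_or_lt_of_le hle with heq | hlt
    · rw [show m - n = 0 from by omega] at hGT
      simp only [List.replicate_zero, List.append_nil, List.nil_append] at hGT
      exact not_lex_self _ hGT
    · exact not_lex_ra_rb hh (by omega) _ _ hGT
  · -- m < n → regular
    intro hmn
    refine ⟨by intro hc; have := congrArg List.length hc; simp at this; omega, ?_⟩
    intro L R hL hR hEq
    unfold wordGT
    rw [List.append_assoc, List.append_assoc] at hEq
    rcases split_rep hEq.symm with ⟨i, hik, hLv, hRv⟩ | ⟨L1, hL1, hE1⟩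
    · -- L = α^i
      have hi1 : 1 ≤ i := by
        rcases Nat.eq_zero_or_pos i with rfl | h1
        · rw [hLv] at hL; simp at hL
        · exact h1
      subst hLv hRv
      rcases Nat.lt_or_ge i h with hih | hih
      · -- i < h : R starts with α^(h-i), peel
        simp only [List.append_assoc]
        rw [show (List.replicate i HWLetter.α ++ (List.replicate (h - i) HWLetter.α ++
            (List.replicate m HWLetter.β ++ (List.replicate h HWLetter.α ++
              List.replicate n HWLetter.β)))) =
          (List.replicate h HWLetter.α ++ (List.replicate m HWLetter.β ++
            (List.replicate h HWLetter.α ++ List.replicate n HWLetter.β))) from by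
            rw [← List.append_assoc, ← List.replicate_add,
              show i + (h - i) = h from by omega]]
        exact lex_alpha (by omega) hm _ _
      · -- i = h
        rw [show i = h from by omega, Nat.sub_self]
        simp only [List.replicate_zero, List.nil_append, List.append_assoc]
        exact lex_rb_ra hm hh _ _
    · -- L = α^h ++ L1, L1 ++ R = β^m ++ (α^h ++ β^n)
      rcases split_rep hE1 with ⟨j, hjk, hL1v, hRv⟩ | ⟨L2, hL2, hE2⟩
      · subst hL1v hRv hL1
        rcases Nat.lt_or_ge j m with hjm | hjm
        · -- R starts with β
          simp only [List.append_assoc]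
          exact lex_rb_ra (by omega) hh _ _
        · -- j = m : key case
          rw [show j = m from by omega, Nat.sub_self]
          simp only [List.replicate_zero, List.nil_append, List.append_assoc]
          exact key hh hmn
      · -- L = α^h ++ (β^m ++ L2), L2 ++ R = α^h ++ β^n
        rcases split_rep hE2 with ⟨i, hik, hL2v, hRv⟩ | ⟨L3, hL3, hE3⟩
        · subst hL2v hRv hL2 hL1
          rcases Nat.eq_zero_or_pos i with rfl | hi1
          · -- L = α^h ++ β^m : key case
            simp only [List.replicate_zero, List.append_nil, Nat.sub_zero,
              List.append_assoc]
            exact key hh hmn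
          rcases Nat.lt_or_ge i h with hih | hih
          · -- peel α^(h-i)
            simp only [List.append_assoc]
            rw [show (List.replicate h HWLetter.α ++ (List.replicate m HWLetter.β ++
                (List.replicate i HWLetter.α ++ (List.replicate (h - i) HWLetter.α ++
                  List.replicate n HWLetter.β)))) =
              (List.replicate h HWLetter.α ++ (List.replicate m HWLetter.β ++
                (List.replicate h HWLetter.α ++ List.replicate n HWLetter.β))) from by
                rw [← List.append_assoc (List.replicate i HWLetter.α), ← List.replicate_add,
                  show i + (h - i) = h from by omega]]
            exact lex_alpha (by omega) hn _ _
          · -- i = h : R = β^n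
            rw [show i = h from by omega, Nat.sub_self]
            simp only [List.replicate_zero, List.nil_append, List.append_assoc]
            exact lex_rb_ra hn hh _ _
        · -- L3 ++ R = β^n
          rcases split_rep (T := []) (by simpa using hE3) with ⟨j, hjk, hL3v, hRv⟩ | ⟨L4, hL4, hE4⟩
          · have hj : j < n := by
              rcases Nat.eq_or_lt_of_le hjk with rfl | hlt
              · exfalso; apply hR; rw [hRv]; simp
              · exact hlt
            subst hL3v hRv hL3 hL2 hL1
            simp only [List.append_nil, List.append_assoc]
            exact lex_rb_ra (by omega) hh _ _
          · exact absurd (List.append_eq_nil_iff.mp hE4).2 hR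

end HWProof

/-- For positive integers `h`, `m`, `n`, the word `α^h β^m α^h β^n` is regular
if and only if `m < n`. -/
theorem regular_iff_lt (h m n : ℕ) (hh : 1 ≤ h) (hm : 1 ≤ m) (hn : 1 ≤ n) :
    IsRegularWord (wordPow [HWLetter.α] h ++ wordPow [HWLetter.β] m ++
      wordPow [HWLetter.α] h ++ wordPow [HWLetter.β] n) ↔ m < n :=
  HWProof.main h m n hh hm hn
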